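/- (Theorem 1 of the paper, claim (11).) For all integers s ≥ 1 and u with 0 ≤ u ≤ pow_s, every coefficient of the high part χ(s,u)_H := Σ_{i > ts+u(k−1)} coeff(χ(s,u), X^i)·X^i belongs to the subspace I_{s+1}; that is, for every degree i > ts + u(k−1), the coefficient of X^i in χ(s,u) lies in I_{s+1}. -/

import Mathlib

open Polynomial

noncomputable def Lam (F : Type*) [CommRing F] (t k : ℕ) :
    Polynomial (MvPolynomial (Fin t ⊕ Fin k) F) :=
  X ^ t + ∑ j : Fin t, C (MvPolynomial.X (Sum.inl j)) * X ^ (j : ℕ)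

noncomputable def Pp (F : Type*) [CommRing F] (t k : ℕ) :
    Polynomial (MvPolynomial (Fin t ⊕ Fin k) F) :=
  ∑ i : Fin k, C (MvPolynomial.X (Sum.inr i)) * X ^ (i : ℕ)

noncomputable def liftP (F : Type*) [CommRing F] (t k : ℕ) (f : Polynomial F) :
    Polynomial (MvPolynomial (Fin t ⊕ Fin k) F) :=
  f.map MvPolynomial.C

/-- `Ω`, the negated quotient in the division of `Λ·R` by the monic polynomial `G`. -/
noncomputable def Om (F : Type*) [Field F] (t k : ℕ) (R G : Polynomial F) :
    Polynomial (MvPolynomial (Fin t ⊕ Fin k) F) :=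
  -((Lam F t k * liftP F t k R) /ₘ liftP F t k G)

/-- `χ(s,u) := Λ^{s−u}·(Λ·R + Ω·G)^u` if `u < s`, and
`χ(s,u) := (Σ_{i=0}^{s−1} binom(u,i) Λ^{s−i} R^{u−i} Ω^i G^i) mod G^s` if `u ≥ s`. -/
noncomputable def chi (F : Type*) [Field F] (t k : ℕ) (R G : Polynomial F) (s u : ℕ) :
    Polynomial (MvPolynomial (Fin t ⊕ Fin k) F) :=
  if u < s then
    Lam F t k ^ (s - u) * (Lam F t k * liftP F t k R + Om F t k R G * liftP F t k G) ^ u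
  else
    (∑ i ∈ Finset.range s, u.choose i •
      (Lam F t k ^ (s - i) * liftP F t k R ^ (u - i) * Om F t k R G ^ i * liftP F t k G ^ i))
      %ₘ liftP F t k G ^ s

/-- `ID F t k R G D` is the smallest `F`-linear subspace of
`A = F[λ₀,…,λ_{t−1},p₀,…,p_{k−1}]` containing all coefficients of
`Λ·P − (Λ·R mod G)` and closed under multiplication by any monomial `m`
whenever the total degree of the product is at most `D`. -/
noncomputable def ID (F : Type*) [Field F] (t k : ℕ) (R G : Polynomial F) (D : ℕ) :
    Submodule F (MvPolynomial (Fin t ⊕ Fin k) F) :=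
  sInf {W : Submodule F (MvPolynomial (Fin t ⊕ Fin k) F) |
    (Set.range (Lam F t k * Pp F t k - (Lam F t k * liftP F t k R) %ₘ liftP F t k G).coeff) ⊆ W ∧
    ∀ f ∈ W, ∀ d : (Fin t ⊕ Fin k) →₀ ℕ,
      ((MvPolynomial.monomial d (1 : F)) * f).totalDegree ≤ D →
      (MvPolynomial.monomial d (1 : F)) * f ∈ W}

namespace St14

variable (F : Type*) [Field F] (t k : ℕ) (R G : Polynomial F)

/-- `M = (Λ·R) mod G`. -/
noncomputable def Mm : Polynomial (MvPolynomial (Fin t ⊕ Fin k) F) :=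
  (Lam F t k * liftP F t k R) %ₘ liftP F t k G

/-- `K = Λ·P − M`, the "key equation" polynomial whose coefficients generate `I_D`. -/
noncomputable def Kk : Polynomial (MvPolynomial (Fin t ⊕ Fin k) F) :=
  Lam F t k * Pp F t k - Mm F t k R G

noncomputable def psi (s u : ℕ) : Polynomial (MvPolynomial (Fin t ⊕ Fin k) F) :=
  ∑ i ∈ Finset.range s, u.choose i •
    (Lam F t k ^ (s - i) * liftP F t k R ^ (u - i) * Om F t k R G ^ i * liftP F t k G ^ i)

noncomputable def psit (s u : ℕ) : Polynomial (MvPolynomial (Fin t ⊕ Fin k) F) :=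
  ∑ i ∈ Finset.range s, u.choose i •
    (Lam F t k ^ (s - 1 - i) * liftP F t k R ^ (u - i) * Om F t k R G ^ i * liftP F t k G ^ i)

noncomputable def Phi (s u : ℕ) : Polynomial (MvPolynomial (Fin t ⊕ Fin k) F) :=
  psi F t k R G s u %ₘ liftP F t k G ^ s

/-- Elements of total degree at most `d` form an `F`-submodule. -/
def degLE (d : ℕ) : Submodule F (MvPolynomial (Fin t ⊕ Fin k) F) where
  carrier := {x | x.totalDegree ≤ d}
  add_mem' := fun ha hb => le_trans (MvPolynomial.totalDegree_add _ _) (max_le ha hb)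
  zero_mem' := by simp
  smul_mem' := fun c x hx =>
    le_trans (MvPolynomial.totalDegree_smul_le c x) hx

lemma mem_degLE {d : ℕ} {x : MvPolynomial (Fin t ⊕ Fin k) F} :
    x ∈ degLE F t k d ↔ x.totalDegree ≤ d := Iff.rfl

lemma degLE_mono {d e : ℕ} (h : d ≤ e) : degLE F t k d ≤ degLE F t k e :=
  fun _ hx => le_trans hx h

lemma liftP_pow (f : Polynomial F) (m : ℕ) :
    liftP F t k (f ^ m) = liftP F t k f ^ m := by simp [liftP]

/-- Division/remainder by (the lift of) a monic polynomial over `F` preserves any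
coefficientwise submodule condition. -/
lemma coeff_divmod_mem (V : Submodule F (MvPolynomial (Fin t ⊕ Fin k) F))
    {B : Polynomial F} (hB : B.Monic)
    {p : Polynomial (MvPolynomial (Fin t ⊕ Fin k) F)} (hp : ∀ i, p.coeff i ∈ V) :
    (∀ j, (p /ₘ liftP F t k B).coeff j ∈ V) ∧ (∀ j, (p %ₘ liftP F t k B).coeff j ∈ V) := by
  have hBl : (liftP F t k B).Monic := hB.map _
  set Bl := liftP F t k B with hBldef
  set q := ∑ i ∈ Finset.range (p.natDegree + 1), p.coeff i • ((X : Polynomial (MvPolynomial (Fin t ⊕ Fin k) F)) ^ i /ₘ Bl) with hq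
  set r := ∑ i ∈ Finset.range (p.natDegree + 1), p.coeff i • ((X : Polynomial (MvPolynomial (Fin t ⊕ Fin k) F)) ^ i %ₘ Bl) with hr
  have hdeg : r.degree < Bl.degree := by
    refine lt_of_le_of_lt (Polynomial.degree_sum_le _ _) ?_
    rw [Finset.sup_lt_iff]
    · intro i _
      exact lt_of_le_of_lt (Polynomial.degree_smul_le _ _) (Polynomial.degree_modByMonic_lt _ hBl)
    · rw [Polynomial.degree_eq_natDegree hBl.ne_zero]
      exact WithBot.bot_lt_coe _
  have hsum : r + Bl * q = p := by
    rw [hq, hr, Finset.mul_sum, ← Finset.sum_add_distrib]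
    conv_rhs => rw [p.as_sum_range]
    refine Finset.sum_congr rfl fun i _ => ?_
    rw [mul_smul_comm, ← smul_add, Polynomial.modByMonic_add_div _ Bl]
    rw [Polynomial.smul_eq_C_mul, Polynomial.C_mul_X_pow_eq_monomial]
  obtain ⟨hq', hr'⟩ := Polynomial.div_modByMonic_unique q r hBl ⟨hsum, hdeg⟩
  constructor
  · intro j
    rw [hq', hq, Polynomial.finset_sum_coeff]
    refine Submodule.sum_mem _ fun i _ => ?_
    rw [Polynomial.coeff_smul]
    have : (X : Polynomial (MvPolynomial (Fin t ⊕ Fin k) F)) ^ i /ₘ Bl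
        = liftP F t k ((X : Polynomial F) ^ i /ₘ B) := by
      rw [liftP, Polynomial.map_divByMonic _ hB]
      simp [hBldef, liftP]
    rw [this, liftP, Polynomial.coeff_map]
    rw [smul_eq_mul, mul_comm, ← MvPolynomial.smul_eq_C_mul]
    exact Submodule.smul_mem _ _ (hp i)
  · intro j
    rw [hr', hr, Polynomial.finset_sum_coeff]
    refine Submodule.sum_mem _ fun i _ => ?_
    rw [Polynomial.coeff_smul]
    have : (X : Polynomial (MvPolynomial (Fin t ⊕ Fin k) F)) ^ i %ₘ Bl
        = liftP F t k ((X : Polynomial F) ^ i %ₘ B) := by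
      rw [liftP, Polynomial.map_modByMonic _ hB]
      simp [hBldef, liftP]
    rw [this, liftP, Polynomial.coeff_map]
    rw [smul_eq_mul, mul_comm, ← MvPolynomial.smul_eq_C_mul]
    exact Submodule.smul_mem _ _ (hp i)


lemma coeff_modByMonic_mem (V : Submodule F (MvPolynomial (Fin t ⊕ Fin k) F))
    {B : Polynomial F} (hB : B.Monic)
    {p : Polynomial (MvPolynomial (Fin t ⊕ Fin k) F)} (hp : ∀ i, p.coeff i ∈ V) :
    ∀ j, (p %ₘ liftP F t k B).coeff j ∈ V :=
  (coeff_divmod_mem F t k V hB hp).2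

lemma coeff_mul_mem_degLE {dp dq : ℕ} {p q : Polynomial (MvPolynomial (Fin t ⊕ Fin k) F)}
    (hp : ∀ i, p.coeff i ∈ degLE F t k dp) (hq : ∀ i, q.coeff i ∈ degLE F t k dq) :
    ∀ i, (p * q).coeff i ∈ degLE F t k (dp + dq) := by
  intro i
  rw [Polynomial.coeff_mul]
  refine Submodule.sum_mem _ fun x _ => ?_
  exact le_trans (MvPolynomial.totalDegree_mul _ _) (add_le_add (hp x.1) (hq x.2))

lemma coeff_pow_mem_degLE {d : ℕ} {p : Polynomial (MvPolynomial (Fin t ⊕ Fin k) F)}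
    (hp : ∀ i, p.coeff i ∈ degLE F t k d) (m : ℕ) :
    ∀ i, (p ^ m).coeff i ∈ degLE F t k (m * d) := by
  induction m with
  | zero =>
    intro i
    rw [pow_zero, Polynomial.coeff_one]
    split <;> simp [mem_degLE]
  | succ m ih =>
    intro i
    rw [pow_succ]
    have := coeff_mul_mem_degLE F t k ih hp i
    rwa [show m * d + d = (m + 1) * d by ring] at this

lemma coeff_Lam_mem : ∀ i, (Lam F t k).coeff i ∈ degLE F t k 1 := by
  intro i
  rw [Lam, Polynomial.coeff_add]
  refine Submodule.add_mem _ ?_ ?_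
  · rw [Polynomial.coeff_X_pow]
    split <;> simp [mem_degLE]
  · rw [Polynomial.finset_sum_coeff]
    refine Submodule.sum_mem _ fun j _ => ?_
    rw [Polynomial.coeff_C_mul_X_pow]
    split
    · simpa [mem_degLE] using MvPolynomial.totalDegree_X _
    · simp [mem_degLE]

lemma coeff_Pp_mem : ∀ i, (Pp F t k).coeff i ∈ degLE F t k 1 := by
  intro i
  rw [Pp, Polynomial.finset_sum_coeff]
  refine Submodule.sum_mem _ fun j _ => ?_
  rw [Polynomial.coeff_C_mul_X_pow]
  split
  · simpa [mem_degLE] using MvPolynomial.totalDegree_X _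
  · simp [mem_degLE]

lemma coeff_liftP_mem (f : Polynomial F) : ∀ i, (liftP F t k f).coeff i ∈ degLE F t k 0 := by
  intro i
  rw [liftP, Polynomial.coeff_map]
  simp [mem_degLE]

lemma coeff_LamR_mem : ∀ i, (Lam F t k * liftP F t k R).coeff i ∈ degLE F t k 1 := by
  have := coeff_mul_mem_degLE F t k (coeff_Lam_mem F t k) (coeff_liftP_mem F t k R)
  simpa using this

lemma coeff_Mm_mem (hG : G.Monic) : ∀ i, (Mm F t k R G).coeff i ∈ degLE F t k 1 :=
  coeff_modByMonic_mem F t k _ hG (coeff_LamR_mem F t k R)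

lemma coeff_Om_mem (hG : G.Monic) : ∀ i, (Om F t k R G).coeff i ∈ degLE F t k 1 := by
  intro i
  rw [Om, Polynomial.coeff_neg]
  refine Submodule.neg_mem _ ?_
  exact (coeff_divmod_mem F t k _ hG (coeff_LamR_mem F t k R)).1 i

lemma coeff_Kk_mem (hG : G.Monic) : ∀ i, (Kk F t k R G).coeff i ∈ degLE F t k 2 := by
  intro i
  rw [Kk, Polynomial.coeff_sub]
  refine Submodule.sub_mem _ ?_ (degLE_mono F t k one_le_two (coeff_Mm_mem F t k R G hG i))
  exact coeff_mul_mem_degLE F t k (coeff_Lam_mem F t k) (coeff_Pp_mem F t k) i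

lemma coeff_term_mem (hG : G.Monic) (a b c d : ℕ) : ∀ i,
    (Lam F t k ^ a * liftP F t k R ^ b * Om F t k R G ^ c * liftP F t k G ^ d).coeff i
      ∈ degLE F t k (a + c) := by
  have h1 := coeff_pow_mem_degLE F t k (coeff_Lam_mem F t k) a
  have h2 := coeff_pow_mem_degLE F t k (coeff_liftP_mem F t k R) b
  have h3 := coeff_pow_mem_degLE F t k (coeff_Om_mem F t k R G hG) c
  have h4 := coeff_pow_mem_degLE F t k (coeff_liftP_mem F t k G) d
  have := coeff_mul_mem_degLE F t k
    (coeff_mul_mem_degLE F t k (coeff_mul_mem_degLE F t k h1 h2) h3) h4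
  simpa [Nat.mul_one, Nat.mul_zero] using this

lemma coeff_psit_mem (hG : G.Monic) (s u : ℕ) :
    ∀ i, (psit F t k R G s u).coeff i ∈ degLE F t k (s - 1) := by
  intro i
  rw [psit, Polynomial.finset_sum_coeff]
  refine Submodule.sum_mem _ fun j hj => ?_
  rw [Polynomial.coeff_smul]
  refine nsmul_mem ?_ _
  refine degLE_mono F t k ?_ (coeff_term_mem F t k R G hG (s - 1 - j) (u - j) j j i)
  rw [Finset.mem_range] at hj
  omega

lemma coeff_psi_mem (hG : G.Monic) (s u : ℕ) :
    ∀ i, (psi F t k R G s u).coeff i ∈ degLE F t k s := by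
  intro i
  rw [psi, Polynomial.finset_sum_coeff]
  refine Submodule.sum_mem _ fun j hj => ?_
  rw [Polynomial.coeff_smul]
  refine nsmul_mem ?_ _
  refine degLE_mono F t k ?_ (coeff_term_mem F t k R G hG (s - j) (u - j) j j i)
  rw [Finset.mem_range] at hj
  omega

lemma coeff_Phi_mem (hG : G.Monic) (s u : ℕ) :
    ∀ i, (Phi F t k R G s u).coeff i ∈ degLE F t k s := by
  have h := coeff_modByMonic_mem F t k (degLE F t k s) (hG.pow s) (coeff_psi_mem F t k R G hG s u)
  rw [liftP_pow] at h
  exact h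

/-! ### `ID` membership machinery -/

lemma coeff_Kk_mem_ID (D : ℕ) : ∀ i, (Kk F t k R G).coeff i ∈ ID F t k R G D := by
  intro i
  exact Submodule.mem_sInf.2 fun W hW => hW.1 ⟨i, rfl⟩

lemma ID_closed {D : ℕ} {f : MvPolynomial (Fin t ⊕ Fin k) F} (hf : f ∈ ID F t k R G D)
    (d : (Fin t ⊕ Fin k) →₀ ℕ)
    (h : ((MvPolynomial.monomial d (1 : F)) * f).totalDegree ≤ D) :
    (MvPolynomial.monomial d (1 : F)) * f ∈ ID F t k R G D :=
  Submodule.mem_sInf.2 fun W hW => hW.2 f (Submodule.mem_sInf.1 hf W hW) d h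

lemma mul_mem_ID {D : ℕ} {x : MvPolynomial (Fin t ⊕ Fin k) F} (hx : x ∈ ID F t k R G D)
    (y : MvPolynomial (Fin t ⊕ Fin k) F) (h : y.totalDegree + x.totalDegree ≤ D) :
    y * x ∈ ID F t k R G D := by
  rw [show y = ∑ m ∈ y.support, MvPolynomial.monomial m (MvPolynomial.coeff m y) from
    (MvPolynomial.support_sum_monomial_coeff y).symm, Finset.sum_mul]
  refine Submodule.sum_mem _ fun m hm => ?_
  have h1 : (MvPolynomial.monomial m (MvPolynomial.coeff m y))
      = (MvPolynomial.coeff m y) • MvPolynomial.monomial m (1 : F) := by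
    rw [MvPolynomial.smul_monomial, smul_eq_mul, mul_one]
  rw [h1, smul_mul_assoc]
  refine Submodule.smul_mem _ _ (ID_closed F t k R G hx m ?_)
  refine le_trans (MvPolynomial.totalDegree_mul _ _) (le_trans (add_le_add ?_ le_rfl) h)
  rw [MvPolynomial.totalDegree_monomial _ one_ne_zero]
  exact MvPolynomial.le_totalDegree hm

lemma coeff_mul_mem_ID {D dx dy : ℕ} {x y : Polynomial (MvPolynomial (Fin t ⊕ Fin k) F)}
    (hx : ∀ i, x.coeff i ∈ ID F t k R G D) (hdx : ∀ i, x.coeff i ∈ degLE F t k dx)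
    (hdy : ∀ i, y.coeff i ∈ degLE F t k dy) (h : dy + dx ≤ D) :
    ∀ i, (y * x).coeff i ∈ ID F t k R G D := by
  intro i
  rw [Polynomial.coeff_mul]
  refine Submodule.sum_mem _ fun z _ => ?_
  exact mul_mem_ID F t k R G (hx z.2) _ (le_trans (add_le_add (hdy z.1) (hdx z.2)) h)

/-! ### Structural identities -/

lemma Mm_eq (hG : (liftP F t k G).Monic) :
    Mm F t k R G = Lam F t k * liftP F t k R + Om F t k R G * liftP F t k G := by
  rw [Mm, Om, Polynomial.modByMonic_eq_sub_mul_div _ (liftP F t k G)]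
  ring

lemma lam_mul_psit {s : ℕ} (hs : 1 ≤ s) (u : ℕ) :
    Lam F t k * psit F t k R G s u = psi F t k R G s u := by
  rw [psi, psit, Finset.mul_sum]
  refine Finset.sum_congr rfl fun i hi => ?_
  rw [Finset.mem_range] at hi
  rw [mul_smul_comm]
  refine congrArg (u.choose i • ·) ?_
  rw [show s - i = (s - 1 - i) + 1 by omega, pow_succ]
  ring

lemma key {s : ℕ} (hs : 1 ≤ s) (hG : (liftP F t k G).Monic) (u : ℕ) :
    psi F t k R G s (u + 1)
      + u.choose (s - 1) • (liftP F t k R ^ (u + 1 - s) * Om F t k R G ^ s * liftP F t k G ^ s)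
      = Mm F t k R G * psit F t k R G s u := by
  obtain ⟨S, rfl⟩ : ∃ S, s = S + 1 := ⟨s - 1, by omega⟩
  set Λ := Lam F t k with hΛ
  set Rl := liftP F t k R with hRl
  set Gl := liftP F t k G with hGl
  set Ω := Om F t k R G with hΩ
  set T : ℕ → Polynomial (MvPolynomial (Fin t ⊕ Fin k) F) :=
    fun i => Λ ^ (S + 1 - i) * Rl ^ (u + 1 - i) * Ω ^ i * Gl ^ i with hT
  set T2 : ℕ → Polynomial (MvPolynomial (Fin t ⊕ Fin k) F) :=
    fun i => Λ ^ (S - i) * Rl ^ (u - i) * Ω ^ (i + 1) * Gl ^ (i + 1) with hT2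
  have hT12 : ∀ i : ℕ, T (i + 1) = T2 i := by
    intro i
    simp only [hT, hT2, Nat.succ_sub_succ]
  have e1 : Λ * Rl * psit F t k R G (S + 1) u = ∑ i ∈ Finset.range (S + 1), u.choose i • T i := by
    rw [psit, Finset.mul_sum]
    refine Finset.sum_congr rfl fun i hi => ?_
    rw [Finset.mem_range] at hi
    by_cases hiu : i ≤ u
    · rw [mul_smul_comm]
      refine congrArg (u.choose i • ·) ?_
      simp only [hT]
      rw [show S + 1 - i = (S + 1 - 1 - i) + 1 by omega, show u + 1 - i = (u - i) + 1 by omega,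
        pow_succ, pow_succ]
      ring
    · rw [Nat.choose_eq_zero_of_lt (by omega), zero_smul, zero_smul, mul_zero]
  have e2 : Ω * Gl * psit F t k R G (S + 1) u
      = ∑ i ∈ Finset.range (S + 1), u.choose i • T2 i := by
    rw [psit, Finset.mul_sum]
    refine Finset.sum_congr rfl fun i hi => ?_
    rw [mul_smul_comm]
    refine congrArg (u.choose i • ·) ?_
    simp only [hT2]
    rw [show S + 1 - 1 - i = S - i from rfl, pow_succ, pow_succ]
    ring
  have e3 : psi F t k R G (S + 1) (u + 1)
      = (∑ i ∈ Finset.range S, u.choose i • T2 i) + ∑ i ∈ Finset.range (S + 1), u.choose i • T i := by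
    rw [psi]
    rw [Finset.sum_range_succ' (fun i => (u + 1).choose i • T i) S]
    have hc : ∀ i ∈ Finset.range S,
        (u + 1).choose (i + 1) • T (i + 1) = u.choose i • T2 i + u.choose (i + 1) • T (i + 1) := by
      intro i _
      rw [Nat.choose_succ_succ, add_smul, hT12]
    rw [Finset.sum_congr rfl hc, Finset.sum_add_distrib]
    rw [Finset.sum_range_succ' (fun i => u.choose i • T i) S]
    simp only [Nat.choose_zero_right, one_smul]
    abel
  have hM : Mm F t k R G = Λ * Rl + Ω * Gl := Mm_eq F t k R G hG
  rw [hM, add_mul, e1, e2, e3, Finset.sum_range_succ (fun i => u.choose i • T2 i) S]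
  have hcorr : Rl ^ (u + 1 - (S + 1)) * Ω ^ (S + 1) * Gl ^ (S + 1) = T2 S := by
    simp only [hT2, Nat.sub_self, pow_zero, one_mul, Nat.succ_sub_succ]
  rw [show S + 1 - 1 = S from rfl, hcorr]
  abel

lemma Phi_succ {s : ℕ} (hs : 1 ≤ s) (hG : (liftP F t k G).Monic) (u : ℕ) :
    Phi F t k R G s (u + 1) =
      (Pp F t k * Phi F t k R G s u - Kk F t k R G * psit F t k R G s u)
        %ₘ liftP F t k G ^ s := by
  have hgs : ((liftP F t k G) ^ s).Monic := hG.pow s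
  have hkey := key F t k R G hs hG u
  have hlam := lam_mul_psit F t k R G hs u
  have h1 : psi F t k R G s (u + 1)
      = Pp F t k * psi F t k R G s u - Kk F t k R G * psit F t k R G s u
        - (u.choose (s - 1) : Polynomial (MvPolynomial (Fin t ⊕ Fin k) F)) *
          (liftP F t k R ^ (u + 1 - s) * Om F t k R G ^ s * liftP F t k G ^ s) := by
    have hkk : Kk F t k R G = Lam F t k * Pp F t k - Mm F t k R G := rfl
    rw [nsmul_eq_mul] at hkey
    rw [hkk, ← hlam]
    linear_combination hkey
  have h2 := Polynomial.modByMonic_add_div (psi F t k R G s u) (liftP F t k G ^ s)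
  have h3 : psi F t k R G s (u + 1)
      = (Pp F t k * Phi F t k R G s u - Kk F t k R G * psit F t k R G s u)
        + (liftP F t k G ^ s) *
          (Pp F t k * (psi F t k R G s u /ₘ liftP F t k G ^ s)
            - (u.choose (s - 1) : Polynomial (MvPolynomial (Fin t ⊕ Fin k) F)) *
              (liftP F t k R ^ (u + 1 - s) * Om F t k R G ^ s)) := by
    conv_lhs => rw [h1, ← h2]
    rw [Phi]
    generalize u + 1 - s = a
    ring
  rw [Phi, h3, Polynomial.add_modByMonic,
    (Polynomial.modByMonic_eq_zero_iff_dvd hgs).2 ⟨_, rfl⟩, add_zero]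

lemma psi_zero {s : ℕ} (hs : 1 ≤ s) : psi F t k R G s 0 = Lam F t k ^ s := by
  rw [psi, Finset.sum_eq_single 0]
  · simp
  · intro i _ hne
    rw [Nat.choose_eq_zero_of_lt (by omega), zero_smul]
  · intro h
    exact absurd (Finset.mem_range.2 (by omega)) h

lemma psi_eq_of_lt {s u : ℕ} (hus : u < s) (hG : (liftP F t k G).Monic) :
    psi F t k R G s u =
      Lam F t k ^ (s - u) * (Lam F t k * liftP F t k R + Om F t k R G * liftP F t k G) ^ u := by
  induction u generalizing s with
  | zero =>
    rw [psi_zero F t k R G (by omega), pow_zero, mul_one, Nat.sub_zero]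
  | succ u ih =>
    have hs : 1 ≤ s := by omega
    have hkey := key F t k R G hs hG u
    rw [Nat.choose_eq_zero_of_lt (by omega), zero_smul, add_zero] at hkey
    have hpsit : psit F t k R G s u = psi F t k R G (s - 1) u := by
      rw [psit, psi]
      refine (Finset.sum_subset (Finset.range_subset_range.2 (by omega)) fun i hi hni => ?_).symm
      rw [Finset.mem_range] at hi
      rw [Finset.mem_range, not_lt] at hni
      rw [Nat.choose_eq_zero_of_lt (by omega), zero_smul]
    rw [hkey, hpsit, ih (by omega), Mm_eq F t k R G hG,
      show s - (u + 1) = s - 1 - u by omega]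
    rw [pow_succ]
    ring

lemma natDegree_Lam_le : (Lam F t k).natDegree ≤ t := by
  rw [Lam]
  refine le_trans (Polynomial.natDegree_add_le _ _) (max_le (by simp) ?_)
  refine Polynomial.natDegree_sum_le_of_forall_le _ _ fun j _ => ?_
  refine le_trans (Polynomial.natDegree_mul_le) ?_
  simp only [Polynomial.natDegree_C, Polynomial.natDegree_X_pow, zero_add]
  omega

lemma natDegree_Pp_le (hk : 1 ≤ k) : (Pp F t k).natDegree ≤ k - 1 := by
  rw [Pp]
  refine Polynomial.natDegree_sum_le_of_forall_le _ _ fun j _ => ?_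
  refine le_trans (Polynomial.natDegree_mul_le) ?_
  simp only [Polynomial.natDegree_C, Polynomial.natDegree_X_pow, zero_add]
  omega

lemma natDegree_Mm_le {n : ℕ} (hG : G.Monic) (hGdeg : G.natDegree = n) (hn : 1 ≤ n) :
    (Mm F t k R G).natDegree ≤ n - 1 := by
  have hGl : (liftP F t k G).Monic := hG.map _
  have hGln : (liftP F t k G).natDegree = n := by
    rw [liftP, hG.natDegree_map, hGdeg]
  have hne1 : liftP F t k G ≠ 1 := by
    intro h
    rw [h, Polynomial.natDegree_one] at hGln
    omega
  have h := Polynomial.natDegree_modByMonic_lt (Lam F t k * liftP F t k R) hGl hne1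
  rw [hGln] at h
  rw [Mm]
  omega

lemma chi_eq_Phi {n s : ℕ} (hs : 1 ≤ s) (hG : G.Monic) (hGdeg : G.natDegree = n)
    (htn : t < n) (u : ℕ) : chi F t k R G s u = Phi F t k R G s u := by
  have hGl : (liftP F t k G).Monic := hG.map _
  have hGln : (liftP F t k G).natDegree = n := by
    rw [liftP, hG.natDegree_map, hGdeg]
  by_cases hus : u < s
  · rw [chi, if_pos hus, Phi, psi_eq_of_lt F t k R G hus hGl]
    symm
    rw [Polynomial.modByMonic_eq_self_iff (hGl.pow s)]
    have hMle : (Lam F t k * liftP F t k R + Om F t k R G * liftP F t k G).natDegree ≤ n - 1 := by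
      rw [← Mm_eq F t k R G hGl]
      exact natDegree_Mm_le F t k R G hG hGdeg (by omega)
    have hnd : (Lam F t k ^ (s - u) *
        (Lam F t k * liftP F t k R + Om F t k R G * liftP F t k G) ^ u).natDegree < s * n := by
      refine lt_of_le_of_lt Polynomial.natDegree_mul_le ?_
      have h1 : (Lam F t k ^ (s - u)).natDegree ≤ (s - u) * t :=
        le_trans Polynomial.natDegree_pow_le (Nat.mul_le_mul_left _ (natDegree_Lam_le F t k))
      have h2 : ((Lam F t k * liftP F t k R + Om F t k R G * liftP F t k G) ^ u).natDegree
          ≤ u * (n - 1) :=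
        le_trans Polynomial.natDegree_pow_le (Nat.mul_le_mul_left _ hMle)
      have hb : (s - u) * t ≤ (s - u) * (n - 1) := Nat.mul_le_mul_left _ (by omega)
      have hc : (s - u) * (n - 1) + u * (n - 1) = s * (n - 1) := by
        rw [← Nat.add_mul, Nat.sub_add_cancel (by omega)]
      have hd : s * (n - 1) + s = s * n := by
        rw [← Nat.mul_succ]
        congr 1
        omega
      omega
    refine lt_of_le_of_lt Polynomial.degree_le_natDegree ?_
    rw [Polynomial.degree_eq_natDegree (hGl.pow s).ne_zero, hGl.natDegree_pow, hGln]
    exact_mod_cast hnd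
  · rw [chi, if_neg hus, Phi, psi]

lemma main {n : ℕ} (hG : G.Monic) (hGdeg : G.natDegree = n) (htn : t < n)
    (hk : 1 ≤ k) {s : ℕ} (hs : 1 ≤ s) :
    ∀ u, s * t + u * (k - 1) ≤ s * n - 1 →
      ∀ i, s * t + u * (k - 1) < i → (Phi F t k R G s u).coeff i ∈ ID F t k R G (s + 1) := by
  have hGl : (liftP F t k G).Monic := hG.map _
  have hGln : (liftP F t k G).natDegree = n := by
    rw [liftP, hG.natDegree_map, hGdeg]
  have hn : 1 ≤ n := by omega
  have hstn : s * t < s * n := by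
    have h1 : s * (t + 1) ≤ s * n := Nat.mul_le_mul_left s htn
    rw [Nat.mul_succ] at h1
    omega
  intro u
  induction u with
  | zero =>
    intro hu i hi
    rw [Phi, psi_zero F t k R G hs]
    have hnd : (Lam F t k ^ s).natDegree ≤ s * t :=
      le_trans Polynomial.natDegree_pow_le (Nat.mul_le_mul_left _ (natDegree_Lam_le F t k))
    have heq : Lam F t k ^ s %ₘ liftP F t k G ^ s = Lam F t k ^ s := by
      rw [Polynomial.modByMonic_eq_self_iff (hGl.pow s)]
      refine lt_of_le_of_lt Polynomial.degree_le_natDegree ?_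
      rw [Polynomial.degree_eq_natDegree (hGl.pow s).ne_zero, hGl.natDegree_pow, hGln]
      exact_mod_cast lt_of_le_of_lt hnd hstn
    rw [heq, Polynomial.coeff_eq_zero_of_natDegree_lt (by omega)]
    exact Submodule.zero_mem _
  | succ u ih =>
    intro hu1 i hi
    have hexp : (u + 1) * (k - 1) = u * (k - 1) + (k - 1) := by ring
    have hu : s * t + u * (k - 1) ≤ s * n - 1 := by omega
    have IH := ih hu
    set θ := s * t + u * (k - 1) with hθ
    set Lo : Polynomial (MvPolynomial (Fin t ⊕ Fin k) F) :=
      ∑ j ∈ Finset.range (θ + 1), Polynomial.C ((Phi F t k R G s u).coeff j) * Polynomial.X ^ j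
      with hLo
    set Hi := Phi F t k R G s u - Lo with hHi
    have hLocoeff : ∀ j, Lo.coeff j = if j ≤ θ then (Phi F t k R G s u).coeff j else 0 := by
      intro j
      rw [hLo, Polynomial.finset_sum_coeff]
      simp only [Polynomial.coeff_C_mul, Polynomial.coeff_X_pow, mul_ite, mul_one, mul_zero]
      rw [Finset.sum_ite_eq (Finset.range (θ + 1)) j
        (fun m => (Phi F t k R G s u).coeff m)]
      simp [Finset.mem_range, Nat.lt_succ_iff]
    have hLodeg : Lo.natDegree ≤ θ := by
      refine Polynomial.natDegree_sum_le_of_forall_le _ _ fun j hj => ?_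
      refine le_trans Polynomial.natDegree_mul_le ?_
      rw [Finset.mem_range] at hj
      simp only [Polynomial.natDegree_C, Polynomial.natDegree_X_pow, zero_add]
      omega
    have hHicoeffJ : ∀ j, Hi.coeff j ∈ ID F t k R G (s + 1) := by
      intro j
      rw [hHi, Polynomial.coeff_sub, hLocoeff]
      by_cases hjθ : j ≤ θ
      · rw [if_pos hjθ, sub_self]
        exact Submodule.zero_mem _
      · rw [if_neg hjθ, sub_zero]
        exact IH j (by omega)
    have hHideg : ∀ j, Hi.coeff j ∈ degLE F t k s := by
      intro j
      rw [hHi, Polynomial.coeff_sub, hLocoeff]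
      by_cases hjθ : j ≤ θ
      · rw [if_pos hjθ, sub_self]
        exact Submodule.zero_mem _
      · rw [if_neg hjθ, sub_zero]
        exact coeff_Phi_mem F t k R G hG s u j
    rw [Phi_succ F t k R G hs hGl u]
    have hsplit : Pp F t k * Phi F t k R G s u - Kk F t k R G * psit F t k R G s u
        = Pp F t k * Lo + (Pp F t k * Hi - Kk F t k R G * psit F t k R G s u) := by
      rw [hHi]
      ring
    rw [hsplit, Polynomial.add_modByMonic, Polynomial.coeff_add]
    refine Submodule.add_mem _ ?_ ?_
    · have hPLdeg : (Pp F t k * Lo).natDegree ≤ s * t + (u + 1) * (k - 1) := by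
        refine le_trans Polynomial.natDegree_mul_le ?_
        have hP := natDegree_Pp_le F t k hk
        omega
      have heq : (Pp F t k * Lo) %ₘ liftP F t k G ^ s = Pp F t k * Lo := by
        rw [Polynomial.modByMonic_eq_self_iff (hGl.pow s)]
        refine lt_of_le_of_lt Polynomial.degree_le_natDegree ?_
        rw [Polynomial.degree_eq_natDegree (hGl.pow s).ne_zero, hGl.natDegree_pow, hGln]
        exact_mod_cast by omega
      rw [heq, Polynomial.coeff_eq_zero_of_natDegree_lt (by omega)]
      exact Submodule.zero_mem _
    · have hin : ∀ j, (Pp F t k * Hi - Kk F t k R G * psit F t k R G s u).coeff j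
          ∈ ID F t k R G (s + 1) := by
        intro j
        rw [Polynomial.coeff_sub]
        refine Submodule.sub_mem _ ?_ ?_
        · exact coeff_mul_mem_ID F t k R G hHicoeffJ hHideg (coeff_Pp_mem F t k) (by omega) j
        · rw [show Kk F t k R G * psit F t k R G s u
              = psit F t k R G s u * Kk F t k R G from mul_comm _ _]
          exact coeff_mul_mem_ID F t k R G (coeff_Kk_mem_ID F t k R G _)
            (coeff_Kk_mem F t k R G hG) (coeff_psit_mem F t k R G hG s u) (by omega) j
      have h := coeff_modByMonic_mem F t k (ID F t k R G (s + 1)) (hG.pow s) hin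
      rw [liftP_pow] at h
      exact h i

end St14

/-- Theorem 1, claim (11): for `s ≥ 1` and `0 ≤ u ≤ pow_s`
(the condition `u ≤ pow_s = max{u : s·t + u·(k−1) ≤ s·n − 1}` being expressed as
`s·t + u·(k−1) ≤ s·n − 1`), for every degree `i > t·s + u·(k−1)` the coefficient of
`X^i` in `χ(s,u)` lies in `I_{s+1}`. -/
theorem stmt14 (F : Type*) [Field F] (n t k : ℕ) (hn : 0 < n) (ht : 1 ≤ t) (hk : 2 ≤ k)
    (htk : t + k - 1 ≤ n - 1)
    (a b : Fin n → F) (ha : Function.Injective a)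
    (G : Polynomial F) (hG : G = ∏ ℓ : Fin n, (X - C (a ℓ)))
    (R : Polynomial F) (hRdeg : R.degree < n) (hR : ∀ ℓ, R.eval (a ℓ) = b ℓ) :
    ∀ s u : ℕ, 1 ≤ s → s * t + u * (k - 1) ≤ s * n - 1 →
      ∀ i : ℕ, t * s + u * (k - 1) < i →
        (chi F t k R G s u).coeff i ∈ ID F t k R G (s + 1) := by
  have hGm : G.Monic := by
    rw [hG]; exact monic_prod_of_monic _ _ fun i _ => monic_X_sub_C _
  have hGdeg : G.natDegree = n := by
    rw [hG, natDegree_prod_of_monic _ _ fun i _ => monic_X_sub_C _]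
    simp [natDegree_X_sub_C]
  have htn : t < n := by omega
  intro s u hs hu i hi
  rw [St14.chi_eq_Phi F t k R G hs hGm hGdeg htn u]
  exact St14.main F t k R G hGm hGdeg htn (by omega) hs u hu i (by rw [mul_comm s t]; exact hi)
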